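/- Every overlap is a potential overlap: if u, y, v ∈ ℝ^d and i, j ≤ m are such that (u + A_i − y) ∩ (v + A_j) ≠ ∅, then |u − y − v| ≤ R. -/

import Mathlib

open Pointwise Set

noncomputable section

/-- Iterated digit sets: `iterD Q D n i j` is `(Dⁿ)_{ij}`. -/
def iterD {E : Type*} [AddCommGroup E] {m : ℕ}
    (Q : E → E) (D : Fin m → Fin m → Set E) : ℕ → Fin m → Fin m → Set E
  | 0 => fun i j => if i = j then {0} else ∅
  | n + 1 => fun i j => ⋃ l : Fin m, D i l + Q '' iterD Q D n l j

lemma iterD_finite {E : Type*} [AddCommGroup E] {m : ℕ} (Q : E → E)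
    (D : Fin m → Fin m → Set E) (hD : ∀ i j, (D i j).Finite) :
    ∀ n i j, (iterD Q D n i j).Finite := by
  intro n
  induction n with
  | zero =>
    intro i j
    simp only [iterD]
    split <;> simp
  | succ n ih =>
    intro i j
    simp only [iterD]
    exact Set.finite_iUnion fun l => (hD i l).add ((ih l j).image Q)

lemma iterD_expand {d m : ℕ}
    (Q : EuclideanSpace ℝ (Fin d) ≃L[ℝ] EuclideanSpace ℝ (Fin d))
    (D : Fin m → Fin m → Set (EuclideanSpace ℝ (Fin d)))
    (A : Fin m → Set (EuclideanSpace ℝ (Fin d)))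
    (htile : ∀ j, ⇑Q '' A j = ⋃ i, D i j + A i) :
    ∀ n (j : Fin m), ∀ z ∈ A j, ∃ l, ∃ c ∈ iterD (⇑Q) D n l j, ∃ a ∈ A l,
      (⇑Q)^[n] z = c + a := by
  intro n
  induction n with
  | zero =>
    intro j z hz
    exact ⟨j, 0, by simp [iterD], z, hz, by simp⟩
  | succ n ih =>
    intro j z hz
    obtain ⟨l, c, hc, a, ha, hez⟩ := ih j z hz
    have hQa : Q a ∈ ⇑Q '' A l := ⟨a, ha, rfl⟩
    rw [htile l] at hQa
    obtain ⟨s, ⟨i, rfl⟩, hmem⟩ := hQa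
    obtain ⟨dd, hdd, a', ha', hsum⟩ := hmem
    refine ⟨i, dd + Q c, ?_, a', ha', ?_⟩
    · simp only [iterD]
      exact Set.mem_iUnion.2 ⟨l, Set.add_mem_add hdd ⟨c, hc, rfl⟩⟩
    · rw [Function.iterate_succ_apply', hez, map_add, ← hsum]
      abel

/-- every overlap is a potential overlap: if
`(u + A_i − y) ∩ (v + A_j) ≠ ∅` then `|u − y − v| ≤ R`. -/
theorem stmt_4 (d m k : ℕ) (hd : 1 ≤ d) (hm : 1 ≤ m) (hk : 1 ≤ k)
    (Q : EuclideanSpace ℝ (Fin d) ≃L[ℝ] EuclideanSpace ℝ (Fin d))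
    (hQk : ‖(Q.symm : EuclideanSpace ℝ (Fin d) →L[ℝ] EuclideanSpace ℝ (Fin d)) ^ k‖ < 1)
    (D : Fin m → Fin m → Set (EuclideanSpace ℝ (Fin d)))
    (hDfin : ∀ i j, (D i j).Finite)
    (e : ℝ)
    (he : e = sSup {t : ℝ | ∃ i j i' j' : Fin m,
      ∃ x ∈ iterD (⇑Q) D k i j, ∃ y ∈ iterD (⇑Q) D k i' j', t = ‖x - y‖})
    (R : ℝ)
    (hR : R = e * ‖(Q.symm : EuclideanSpace ℝ (Fin d) →L[ℝ] EuclideanSpace ℝ (Fin d)) ^ k‖ /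
      (1 - ‖(Q.symm : EuclideanSpace ℝ (Fin d) →L[ℝ] EuclideanSpace ℝ (Fin d)) ^ k‖))
    (A : Fin m → Set (EuclideanSpace ℝ (Fin d)))
    (hAne : ∀ i, (A i).Nonempty) (hAcp : ∀ i, IsCompact (A i))
    (htile : ∀ j, ⇑Q '' A j = ⋃ i, D i j + A i) :
    ∀ (u y v : EuclideanSpace ℝ (Fin d)) (i j : Fin m),
      (((u - y) +ᵥ A i) ∩ (v +ᵥ A j)).Nonempty → ‖u - y - v‖ ≤ R := by
  set Qc : EuclideanSpace ℝ (Fin d) →L[ℝ] EuclideanSpace ℝ (Fin d) :=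
    (Q.symm : EuclideanSpace ℝ (Fin d) →L[ℝ] EuclideanSpace ℝ (Fin d)) with hQc
  set q : ℝ := ‖Qc ^ k‖ with hqdef
  have hq0 : 0 ≤ q := norm_nonneg _
  have hq1 : q < 1 := hQk
  have h1q : (0:ℝ) < 1 - q := by linarith
  -- the set of differences
  set S : Set ℝ := {t : ℝ | ∃ i j i' j' : Fin m,
      ∃ x ∈ iterD (⇑Q) D k i j, ∃ y ∈ iterD (⇑Q) D k i' j', t = ‖x - y‖} with hSdef
  have hSfin : S.Finite := by
    have hU : (⋃ i : Fin m, ⋃ j : Fin m, iterD (⇑Q) D k i j).Finite :=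
      Set.finite_iUnion fun i => Set.finite_iUnion fun j => iterD_finite (⇑Q) D hDfin k i j
    have : S ⊆ (fun p : EuclideanSpace ℝ (Fin d) × EuclideanSpace ℝ (Fin d) => ‖p.1 - p.2‖) ''
        ((⋃ i : Fin m, ⋃ j : Fin m, iterD (⇑Q) D k i j) ×ˢ
         (⋃ i : Fin m, ⋃ j : Fin m, iterD (⇑Q) D k i j)) := by
      rintro t ⟨i, j, i', j', x, hx, y, hy, rfl⟩
      exact ⟨(x, y), ⟨Set.mem_iUnion.2 ⟨i, Set.mem_iUnion.2 ⟨j, hx⟩⟩,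
        Set.mem_iUnion.2 ⟨i', Set.mem_iUnion.2 ⟨j', hy⟩⟩⟩, rfl⟩
    exact ((hU.prod hU).image _).subset this
  have hSbdd : BddAbove S := hSfin.bddAbove
  have hkey : ∀ (i j i' j' : Fin m) (x : EuclideanSpace ℝ (Fin d)), x ∈ iterD (⇑Q) D k i j →
      ∀ y ∈ iterD (⇑Q) D k i' j', ‖x - y‖ ≤ e := by
    intro i j i' j' x hx y hy
    rw [he]
    exact le_csSup hSbdd ⟨i, j, i', j', x, hx, y, hy, rfl⟩
  -- e ≥ 0
  have hi0 : Nonempty (Fin m) := ⟨⟨0, hm⟩⟩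
  obtain ⟨j0⟩ := hi0
  have he0 : 0 ≤ e := by
    obtain ⟨z0, hz0⟩ := hAne j0
    obtain ⟨l, c, hc, -⟩ := iterD_expand Q D A htile k j0 z0 hz0
    have := hkey l j0 l j0 c hc c hc
    simp only [sub_self, norm_zero] at this
    exact this
  have hR0 : 0 ≤ R := by
    rw [hR]
    exact div_nonneg (mul_nonneg he0 hq0) (le_of_lt h1q)
  have hRq : R * (1 - q) = e * q := by
    rw [hR]
    field_simp
  -- uniform bound on diameters of the A's
  obtain ⟨C0, hC0⟩ : ∃ C0, ∀ x ∈ ⋃ i, A i, ‖x‖ ≤ C0 := by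
    have hcp : IsCompact (⋃ i, A i) := isCompact_iUnion fun i => hAcp i
    exact hcp.isBounded.exists_norm_le.imp fun C0 h => fun x hx => h x hx
  set C : ℝ := C0 + C0 with hCdef
  have hC : ∀ (i' j' : Fin m) (a b : EuclideanSpace ℝ (Fin d)), a ∈ A i' → b ∈ A j' → ‖a - b‖ ≤ C := by
    intro i' j' a b ha hb
    calc ‖a - b‖ ≤ ‖a‖ + ‖b‖ := norm_sub_le a b
    _ ≤ C0 + C0 := add_le_add (hC0 a (Set.mem_iUnion.2 ⟨i', ha⟩))
        (hC0 b (Set.mem_iUnion.2 ⟨j', hb⟩))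
  -- inverse relation
  have hinv : ∀ x : EuclideanSpace ℝ (Fin d), (Qc ^ k) ((⇑Q)^[k] x) = x := by
    intro x
    rw [FunLike.coe_pow_eq_iterate]
    have : Function.LeftInverse (⇑Qc)^[k] (⇑Q)^[k] :=
      Function.LeftInverse.iterate (fun y => Q.symm_apply_apply y) k
    exact this x
  -- main induction
  have main : ∀ n : ℕ, ∀ (j j' : Fin m) (z z' : EuclideanSpace ℝ (Fin d)), z ∈ A j → z' ∈ A j' →
      ‖z - z'‖ ≤ R + q ^ n * C := by
    intro n
    induction n with
    | zero =>
      intro j j' z z' hz hz'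
      have := hC j j' z z' hz hz'
      simp only [pow_zero, one_mul]
      linarith
    | succ n ih =>
      intro j j' z z' hz hz'
      obtain ⟨l, c, hc, a, ha, hez⟩ := iterD_expand Q D A htile k j z hz
      obtain ⟨l', c', hc', a', ha', hez'⟩ := iterD_expand Q D A htile k j' z' hz'
      have hrepr : z - z' = (Qc ^ k) (c - c') + (Qc ^ k) (a - a') := by
        have h1 : z = (Qc ^ k) (c + a) := by rw [← hez, hinv]
        have h2 : z' = (Qc ^ k) (c' + a') := by rw [← hez', hinv]
        rw [h1, h2, ← map_sub, ← map_add]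
        congr 1
        abel
      have hb1 : ‖(Qc ^ k) (c - c')‖ ≤ q * e :=
        le_trans ((Qc ^ k).le_opNorm _)
          (mul_le_mul_of_nonneg_left (hkey l j l' j' c hc c' hc') hq0)
      have hb2 : ‖(Qc ^ k) (a - a')‖ ≤ q * (R + q ^ n * C) :=
        le_trans ((Qc ^ k).le_opNorm _)
          (mul_le_mul_of_nonneg_left (ih l l' a a' ha ha') hq0)
      have : ‖z - z'‖ ≤ q * e + q * (R + q ^ n * C) := by
        rw [hrepr]
        exact le_trans (norm_add_le _ _) (add_le_add hb1 hb2)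
      have h3 : q * (q ^ n * C) = q ^ (n + 1) * C := by ring
      linarith [this, hRq, h3]
  -- finish
  intro u y v i j ⟨p, hpi, hpj⟩
  obtain ⟨a, ha, hpa⟩ := hpi
  obtain ⟨b, hb, hpb⟩ := hpj
  have hw : u - y - v = b - a := by
    have : (u - y) + a = v + b := by
      rw [← hpb] at hpa
      simpa [vadd_eq_add] using hpa
    linear_combination (norm := module) this
  rw [hw]
  have htend : Filter.Tendsto (fun n : ℕ => R + q ^ n * C) Filter.atTop (nhds R) := by
    have : Filter.Tendsto (fun n : ℕ => q ^ n * C) Filter.atTop (nhds 0) := by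
      simpa using (tendsto_pow_atTop_nhds_zero_of_lt_one hq0 hq1).mul_const C
    simpa using Filter.Tendsto.add (tendsto_const_nhds : Filter.Tendsto (fun _ : ℕ => R) _ _) this
  exact ge_of_tendsto' htend fun n => main n j i b a hb ha
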